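/- Let V satisfy the basic assumptions with decay exponent a satisfying 1 < a < 3/2, and assume additionally that there exist constants c₁, c₂ > 0 with c₁ x^{−a−2} ≤ V''(x) ≤ c₂ x^{−a−2} for all x ≥ 1. Let b satisfy 1/2 < b < 2 − a and define ε(i) := −i^{−b}/2 for i ≥ 1. Then ε ∈ Dom E_∞^l, the quadratic-type part Q_∞(ε) := Σ_{k=1}^{∞} Σ_{j=0}^{∞} φ_k(Σ_{l=j+1}^{k+j} ε(l)) is finite, while the linear part diverges: Σ_{i=1}^{∞} σ^∞(i)|ε(i)| = +∞. In particular, defining E_∞^l(ε) := Q_∞(ε) + Σ_{i=1}^{∞} σ^∞(i)ε(i) with values in [−∞, +∞], one has E_∞^l(ε) = −∞, so E_∞^l is not bounded from below on Dom E_∞^l when 1 < a < 3/2. -/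

import Mathlib

open Filter Set MeasureTheory
open scoped Classical ENNReal NNReal BigOperators

noncomputable section

/-- `lam V x` is λ(x) := inf_{(0,x)} V''. -/
def lam (V : ℝ → ℝ) (x : ℝ) : ℝ :=
  sInf (deriv (deriv V) '' Set.Ioo 0 x)

/-- The basic assumptions (Reg), (Sing), (Cvx), (Dec) on the interaction
potential `V`, with decay exponent `a`. -/
structure BasicAssumptions (V : ℝ → ℝ) (a : ℝ) : Prop where
  nonneg : ∀ x : ℝ, 0 ≤ V x
  even : ∀ x : ℝ, V (-x) = V x
  pos : ∀ x : ℝ, x ≠ 0 → 0 < V x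
  smooth : ContDiffOn ℝ 2 V {(0 : ℝ)}ᶜ
  sing : Filter.Tendsto V (nhdsWithin 0 {(0 : ℝ)}ᶜ) Filter.atTop
  cvx : ∀ x : ℝ, 0 < x → 0 < lam V x
  decV : Filter.Tendsto V Filter.atTop (nhds 0)
  decV' : Filter.Tendsto (deriv V) Filter.atTop (nhds 0)
  one_lt_a : 1 < a
  decV'' : ∀ δ : ℝ, 0 < δ → ∃ c : ℝ, 0 < c ∧
    ∀ x : ℝ, δ ≤ |x| → deriv (deriv V) x ≤ c * |x| ^ (-(a + 2))

/-- The configuration space 𝒟_n. -/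
def Dn (n : ℕ) : Set (Fin (n + 1) → ℝ) :=
  {x | x 0 = 0 ∧ x (Fin.last n) = 1 ∧ Monotone x}

/-- The energy E_n(x) := (1/n) Σ_{k=1}^{n} Σ_{j=0}^{n−k} V(n[x(j+k) − x(j)]),
valued in [0,∞], with the convention V(0) = +∞ from (Sing).  The double sum is
written as a sum over all pairs q < p. -/
def En (V : ℝ → ℝ) (n : ℕ) (x : Fin (n + 1) → ℝ) : ℝ≥0∞ :=
  ENNReal.ofReal (1 / (n : ℝ)) *
    ∑ p : Fin (n + 1), ∑ q : Fin (n + 1),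
      if (q : ℕ) < (p : ℕ) then
        (if x p = x q then ⊤ else ENNReal.ofReal (V ((n : ℝ) * (x p - x q))))
      else 0

/-- The first-order Taylor remainder φ_k(y) := V(k+y) − V(k) − V'(k)y. -/
def phi (V : ℝ → ℝ) (k y : ℝ) : ℝ :=
  V (k + y) - V k - deriv V k * y

/-- The lower-bound function Φ_k. -/
def PhiLB (V : ℝ → ℝ) (k y : ℝ) : ℝ :=
  if y ≤ 1 then 1 / 2 * lam V (k + 1) * y ^ 2 else lam V (k + 1) * (y - 1 / 2)

/-- σ^n(i) := Σ_{k=i+1}^{n−i} min(k−i, n−i+1−k)|V'(k)| for 1 ≤ i ≤ ⌊n/2⌋,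
and 0 otherwise. -/
def sigman (V : ℝ → ℝ) (n i : ℕ) : ℝ :=
  if 1 ≤ i ∧ i ≤ n / 2 then
    ∑ k ∈ Finset.Icc (i + 1) (n - i),
      ((min (k - i) (n + 1 - i - k) : ℕ) : ℝ) * |deriv V (k : ℝ)|
  else 0

/-- σ^∞(i) := Σ_{k=i+1}^∞ (k−i)|V'(k)| for i ≥ 1 (index 0 is inert). -/
def sigmaInf (V : ℝ → ℝ) (i : ℕ) : ℝ :=
  if i = 0 then 0
  else ∑' m : ℕ, ((m + 1 : ℕ) : ℝ) * |deriv V ((i + 1 + m : ℕ) : ℝ)|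

/-- Dom E_n^1 := {ε ∈ ℝ^n : −1 ≤ ε(i) ≤ n, Σ_{i=1}^n ε(i) = 0}, regarded as a
subset of ℓ²(ℕ) by extension by zero. -/
def DomEn1 (n : ℕ) : Set (ℕ → ℝ) :=
  {ε | (∀ i, 1 ≤ i → i ≤ n → -1 ≤ ε i ∧ ε i ≤ (n : ℝ)) ∧
    (∀ i, i = 0 ∨ n < i → ε i = 0) ∧
    (∑ i ∈ Finset.Icc 1 n, ε i) = 0}

/-- The renormalised energy
E_n^1(ε) := Σ_{k=1}^{n} Σ_{j=0}^{n−k} [V(k + Σ_{l=j+1}^{j+k} ε(l)) − V(k)]. -/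
def En1 (V : ℝ → ℝ) (n : ℕ) (ε : ℕ → ℝ) : ℝ :=
  ∑ k ∈ Finset.Icc 1 n, ∑ j ∈ Finset.range (n - k + 1),
    (V ((k : ℝ) + ∑ l ∈ Finset.Icc (j + 1) (j + k), ε l) - V (k : ℝ))

/-- The quadratic-type part Q_n(ε) := Σ_{k=1}^{n} Σ_{j=0}^{n−k} φ_k(Σ_{l=j+1}^{k+j} ε(l)). -/
def Qn (V : ℝ → ℝ) (n : ℕ) (ε : ℕ → ℝ) : ℝ :=
  ∑ k ∈ Finset.Icc 1 n, ∑ j ∈ Finset.range (n - k + 1),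
    phi V (k : ℝ) (∑ l ∈ Finset.Icc (j + 1) (j + k), ε l)

/-- The half truncation ε^{n,1/2}(i) := ε(i) for 1 ≤ i ≤ ⌈n/2⌉ and 0 otherwise. -/
def half (n : ℕ) (ε : ℕ → ℝ) (i : ℕ) : ℝ :=
  if 1 ≤ i ∧ i ≤ (n + 1) / 2 then ε i else 0

/-- The reversal ε⃖(i) := ε(n+1−i) for 1 ≤ i ≤ n, extended by zero. -/
def rev (n : ℕ) (ε : ℕ → ℝ) (i : ℕ) : ℝ :=
  if 1 ≤ i ∧ i ≤ n then ε (n + 1 - i) else 0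

/-- Dom E_∞^l := {ε ∈ ℓ²(ℕ) : ε(i) ≥ −1 for all i ≥ 1} (index 0 is inert). -/
def DomEinfl : Set (ℕ → ℝ) :=
  {ε | Summable (fun i => ε i ^ 2) ∧ ε 0 = 0 ∧ ∀ i, 1 ≤ i → -1 ≤ ε i}

/-- Q_∞(ε) := Σ_{k=1}^∞ Σ_{j=0}^∞ φ_k(Σ_{l=j+1}^{k+j} ε(l)), valued in [0,∞]
(the summands are nonnegative). -/
def Qinf (V : ℝ → ℝ) (ε : ℕ → ℝ) : ℝ≥0∞ :=
  ∑' (k : ℕ) (j : ℕ),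
    ENNReal.ofReal (phi V ((k : ℝ) + 1) (∑ l ∈ Finset.Icc (j + 1) (j + k + 1), ε l))

/-- The linear term (σ^∞, ε)_{ℓ²(ℕ)} as an extended real (difference of the
sums of the positive and negative parts). -/
def linPart (V : ℝ → ℝ) (ε : ℕ → ℝ) : EReal :=
  ((∑' i : ℕ, ENNReal.ofReal (sigmaInf V i * ε i) : ℝ≥0∞) : EReal) -
    ((∑' i : ℕ, ENNReal.ofReal (-(sigmaInf V i * ε i)) : ℝ≥0∞) : EReal)

/-- The limit boundary-layer energy E_∞^l(ε) := Q_∞(ε) + (σ^∞, ε), valued in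
the extended reals. -/
def Einfl (V : ℝ → ℝ) (ε : ℕ → ℝ) : EReal :=
  (Qinf V ε : EReal) + linPart V ε

end


section AuxLemmas
open Filter Set

variable {V : ℝ → ℝ} {a : ℝ}

lemma diffV (h2 : ContDiffOn ℝ 2 V {(0:ℝ)}ᶜ) {x : ℝ} (hx : x ≠ 0) : DifferentiableAt ℝ V x :=
  (h2.contDiffAt ((isOpen_compl_singleton).mem_nhds hx)).differentiableAt (by norm_num)

lemma diffV' (h2 : ContDiffOn ℝ 2 V {(0:ℝ)}ᶜ) {x : ℝ} (hx : x ≠ 0) :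
    DifferentiableAt ℝ (deriv V) x :=
  (((h2.deriv_of_isOpen isOpen_compl_singleton (le_refl 2) : ContDiffOn ℝ 1 (deriv V) _).contDiffAt
    ((isOpen_compl_singleton).mem_nhds hx)).differentiableAt one_ne_zero)

lemma mvt_aux (f : ℝ → ℝ) (hd : ∀ t : ℝ, 0 < t → DifferentiableAt ℝ f t)
    {x y : ℝ} (hx : 0 < x) (hxy : x < y) :
    ∃ ξ ∈ Ioo x y, f y - f x = deriv f ξ * (y - x) := by
  obtain ⟨c, hc, hceq⟩ := exists_deriv_eq_slope f hxy
    (fun t ht => (hd t (lt_of_lt_of_le hx ht.1)).continuousAt.continuousWithinAt)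
    (fun t ht => (hd t (lt_trans hx ht.1)).differentiableWithinAt)
  exact ⟨c, hc, by rw [hceq, div_mul_cancel₀ _ (sub_ne_zero.mpr (ne_of_gt hxy))]⟩

lemma mvtV (h2 : ContDiffOn ℝ 2 V {(0:ℝ)}ᶜ) {x y : ℝ} (hx : 0 < x) (hxy : x < y) :
    ∃ ξ ∈ Ioo x y, V y - V x = deriv V ξ * (y - x) :=
  mvt_aux V (fun _ ht => diffV h2 (ne_of_gt ht)) hx hxy

lemma mvtV' (h2 : ContDiffOn ℝ 2 V {(0:ℝ)}ᶜ) {x y : ℝ} (hx : 0 < x) (hxy : x < y) :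
    ∃ ξ ∈ Ioo x y, deriv V y - deriv V x = deriv (deriv V) ξ * (y - x) :=
  mvt_aux (deriv V) (fun _ ht => diffV' h2 (ne_of_gt ht)) hx hxy

/-- V'' > 0 on positives, from (Cvx). -/
lemma Vpp_pos (hcvx : ∀ x : ℝ, 0 < x → 0 < lam V x) {t : ℝ} (ht : 0 < t) :
    0 < deriv (deriv V) t := by
  have h1 : 0 < lam V (t + 1) := hcvx _ (by linarith)
  have hmem : deriv (deriv V) t ∈ deriv (deriv V) '' Set.Ioo 0 (t + 1) :=
    ⟨t, ⟨ht, by linarith⟩, rfl⟩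
  by_cases hbdd : BddBelow (deriv (deriv V) '' Set.Ioo 0 (t + 1))
  · exact lt_of_lt_of_le h1 (csInf_le hbdd hmem)
  · rw [lam, Real.sInf_of_not_bddBelow hbdd] at h1; exact absurd h1 (lt_irrefl 0)

/-- Taylor-type upper bound: φ_x(y) ≤ M y² for y ≤ 0 with x+y > 0. -/
lemma taylor_ub (h2 : ContDiffOn ℝ 2 V {(0:ℝ)}ᶜ)
    (hcvx : ∀ x : ℝ, 0 < x → 0 < lam V x) {x y M : ℝ}
    (hxy : 0 < x + y) (hy : y ≤ 0)
    (hM : ∀ t ∈ Icc (x + y) x, deriv (deriv V) t ≤ M) :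
    V (x + y) - V x - deriv V x * y ≤ M * y ^ 2 := by
  rcases eq_or_lt_of_le hy with h0 | h0
  · subst h0; simp
  · have hlt : x + y < x := by linarith
    obtain ⟨η, hη, hηeq⟩ := mvtV h2 hxy hlt
    obtain ⟨ξ, hξ, hξeq⟩ := mvtV' h2 (lt_trans hxy hη.1) hη.2
    have hVy : V (x + y) - V x = deriv V η * y := by
      have : V x - V (x + y) = deriv V η * (x - (x + y)) := hηeq
      nlinarith [this]
    have hxiM : deriv (deriv V) ξ ≤ M :=
      hM ξ ⟨le_of_lt (lt_trans hη.1 hξ.1), le_of_lt hξ.2⟩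
    have hxipos : 0 < deriv (deriv V) ξ := Vpp_pos hcvx (lt_trans hxy (lt_trans hη.1 hξ.1))
    have hd : deriv V x - deriv V η = deriv (deriv V) ξ * (x - η) := hξeq
    have h1 : x - η ≤ -y := by have := hη.1; linarith
    have h2' : 0 ≤ x - η := le_of_lt (by linarith [hη.2])
    have : V (x + y) - V x - deriv V x * y = deriv (deriv V) ξ * (x - η) * (-y) := by
      rw [hVy]; nlinarith [hd]
    rw [this]
    have key : deriv (deriv V) ξ * (x - η) * (-y) ≤ (M * (-y)) * (-y) :=
      mul_le_mul_of_nonneg_right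
        (mul_le_mul hxiM h1 h2' (le_trans (le_of_lt hxipos) hxiM)) (by linarith)
    nlinarith [key]

/-- V' ≤ 0 on positives. -/
lemma Vp_nonpos (h2 : ContDiffOn ℝ 2 V {(0:ℝ)}ᶜ)
    (hcvx : ∀ x : ℝ, 0 < x → 0 < lam V x)
    (hdec : Tendsto (deriv V) atTop (nhds 0)) {x : ℝ} (hx : 0 < x) :
    deriv V x ≤ 0 := by
  refine ge_of_tendsto hdec ?_
  filter_upwards [eventually_gt_atTop x] with y hy
  obtain ⟨ξ, hξ, heq⟩ := mvtV' h2 hx hy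
  nlinarith [Vpp_pos hcvx (lt_trans hx hξ.1)]

/-- Telescoping p-series tail bound. -/
lemma tail_bound (ha : 1 < a) {x : ℝ} (hx : 1 ≤ x) :
    Summable (fun n : ℕ => (x + n) ^ (-(a + 2))) ∧
      ∑' n : ℕ, (x + n) ^ (-(a + 2)) ≤ 2 * x ^ (-(a + 1)) := by
  have hx0 : 0 < x := by linarith
  set g : ℕ → ℝ := fun n => (x + n) ^ (-(a + 1)) with hg
  have hxn : ∀ n : ℕ, 0 < x + n := fun n => by positivity
  have hgnn : ∀ n : ℕ, 0 ≤ g n - g (n + 1) := by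
    intro n
    have : (x + (n + 1 : ℕ)) ^ (-(a + 1)) ≤ (x + n) ^ (-(a + 1)) :=
      Real.rpow_le_rpow_of_nonpos (hxn n) (by push_cast; linarith) (by linarith)
    simp only [hg]; push_cast at this ⊢; linarith
  have step : ∀ n : ℕ, (x + n + 1) ^ (-(a + 2)) ≤ (1 / (a + 1)) * (g n - g (n + 1)) := by
    intro n
    have hdiff : ∀ t : ℝ, 0 < t → DifferentiableAt ℝ (fun s : ℝ => s ^ (-(a + 1))) t :=
      fun t ht => (Real.hasDerivAt_rpow_const (Or.inl (ne_of_gt ht))).differentiableAt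
    obtain ⟨ξ, hξ, heq⟩ := mvt_aux (fun s : ℝ => s ^ (-(a + 1))) hdiff (hxn n)
      (by linarith : (x + n : ℝ) < x + n + 1)
    have hξ0 : (0:ℝ) < ξ := lt_trans (hxn n) hξ.1
    have hder : deriv (fun s : ℝ => s ^ (-(a + 1))) ξ = -(a + 1) * ξ ^ (-(a + 2)) := by
      rw [Real.deriv_rpow_const ξ (-(a + 1))]
      congr 1; ring_nf
    have hξle : ξ ^ (-(a + 2)) ≥ (x + n + 1) ^ (-(a + 2)) :=
      Real.rpow_le_rpow_of_nonpos hξ0 (le_of_lt hξ.2) (by linarith)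
    have hgdiff : g n - g (n + 1) = (a + 1) * ξ ^ (-(a + 2)) := by
      have h1 : (x + n + 1) ^ (-(a+1)) - (x + n) ^ (-(a+1)) =
          deriv (fun s : ℝ => s ^ (-(a + 1))) ξ * (x + n + 1 - (x + n)) := heq
      rw [hder] at h1
      simp only [hg]; push_cast
      rw [show x + ((n:ℝ)+1) = x + (n:ℝ) + 1 by ring]
      linarith [h1]
    rw [hgdiff]
    rw [one_div, inv_mul_cancel_left₀ (by linarith : a + 1 ≠ 0)]
    exact hξle
  have hgsum : HasSum (fun n => g n - g (n + 1)) (g 0) := by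
    rw [hasSum_iff_tendsto_nat_of_nonneg hgnn]
    have : ∀ m : ℕ, ∑ i ∈ Finset.range m, (g i - g (i + 1)) = g 0 - g m :=
      fun m => Finset.sum_range_sub' g m
    simp_rw [this]
    have hgl : Tendsto g atTop (nhds 0) := by
      have h1 : Tendsto (fun n : ℕ => x + (n:ℝ)) atTop atTop :=
        tendsto_atTop_add_const_left _ _ tendsto_natCast_atTop_atTop
      have h2 : Tendsto (fun t : ℝ => t ^ (-(a+1))) atTop (nhds 0) :=
        tendsto_rpow_neg_atTop (by linarith)
      exact h2.comp h1
    simpa using tendsto_const_nhds.sub hgl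
  have hsum_tail : Summable (fun n : ℕ => (x + n + 1) ^ (-(a + 2))) := by
    refine Summable.of_nonneg_of_le (fun n => by positivity) step ?_
    exact hgsum.summable.mul_left _
  have hsummable : Summable (fun n : ℕ => (x + n) ^ (-(a + 2))) := by
    refine (summable_nat_add_iff 1).1 ?_
    refine hsum_tail.congr fun n => ?_
    push_cast; ring_nf
  refine ⟨hsummable, ?_⟩
  have h0 : (x + (0:ℕ)) ^ (-(a + 2)) = x ^ (-(a+2)) := by norm_num
  have heq0 : ∑' n : ℕ, (x + n) ^ (-(a + 2))
      = x ^ (-(a+2)) + ∑' n : ℕ, (x + (n+1:ℕ)) ^ (-(a + 2)) := by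
    rw [Summable.tsum_eq_zero_add hsummable, h0]
  have htail_eq : ∑' n : ℕ, (x + (n+1:ℕ)) ^ (-(a + 2)) = ∑' n : ℕ, (x + n + 1) ^ (-(a + 2)) := by
    congr 1; funext n; push_cast; ring_nf
  have htail : ∑' n : ℕ, (x + n + 1) ^ (-(a + 2)) ≤ (1/(a+1)) * g 0 := by
    calc ∑' n : ℕ, (x + n + 1) ^ (-(a + 2))
        ≤ ∑' n : ℕ, (1 / (a + 1)) * (g n - g (n + 1)) :=
          Summable.tsum_le_tsum step hsum_tail (hgsum.summable.mul_left _)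
      _ = (1/(a+1)) * g 0 := by rw [tsum_mul_left, hgsum.tsum_eq]
  have hg0 : g 0 = x ^ (-(a+1)) := by simp [hg]
  have h1 : x ^ (-(a+2)) ≤ x ^ (-(a+1)) :=
    Real.rpow_le_rpow_of_exponent_le hx (by linarith)
  have h2 : (1/(a+1)) * g 0 ≤ x ^ (-(a+1)) := by
    rw [hg0]
    have : (1/(a+1)) ≤ 1 := by
      rw [div_le_one (by linarith)]; linarith
    nlinarith [Real.rpow_nonneg (le_of_lt hx0) (-(a+1))]
  rw [heq0, htail_eq]; linarith

/-- lower bound on −V′. -/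
lemma Vp_lb (h2 : ContDiffOn ℝ 2 V {(0:ℝ)}ᶜ)
    (hcvx : ∀ x : ℝ, 0 < x → 0 < lam V x)
    (hdec : Tendsto (deriv V) atTop (nhds 0)) (ha : 1 < a)
    {c₁ : ℝ} (hc₁ : 0 < c₁)
    (hlb : ∀ t : ℝ, 1 ≤ t → c₁ * t ^ (-(a + 2)) ≤ deriv (deriv V) t)
    {x : ℝ} (hx : 1 ≤ x) :
    c₁ * (2 * x) ^ (-(a + 2)) * x ≤ -deriv V x := by
  have hx0 : (0:ℝ) < x := by linarith
  obtain ⟨ξ, hξ, heq⟩ := mvtV' h2 hx0 (by linarith : x < 2 * x)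
  have hξ1 : (1:ℝ) ≤ ξ := le_trans hx (le_of_lt hξ.1)
  have h1 : c₁ * (2 * x) ^ (-(a + 2)) ≤ deriv (deriv V) ξ := by
    refine le_trans ?_ (hlb ξ hξ1)
    have : (2 * x) ^ (-(a + 2)) ≤ ξ ^ (-(a + 2)) :=
      Real.rpow_le_rpow_of_nonpos (by linarith [hξ.1]) (le_of_lt hξ.2) (by linarith)
    nlinarith
  have h2' : deriv V (2 * x) ≤ 0 := Vp_nonpos h2 hcvx hdec (by linarith)
  have key : c₁ * (2 * x) ^ (-(a + 2)) * x ≤ deriv (deriv V) ξ * (2 * x - x) := by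
    have := mul_le_mul_of_nonneg_right h1 (le_of_lt hx0)
    nlinarith [this]
  have heq2 : deriv V (2 * x) - deriv V x = deriv (deriv V) ξ * (2 * x - x) := heq
  linarith [key, h2', heq2]

/-- upper bound on −V′. -/
lemma Vp_ub (h2 : ContDiffOn ℝ 2 V {(0:ℝ)}ᶜ)
    (hdec : Tendsto (deriv V) atTop (nhds 0)) (ha : 1 < a)
    {c₂ : ℝ} (hc₂ : 0 < c₂)
    (hub : ∀ t : ℝ, 1 ≤ t → deriv (deriv V) t ≤ c₂ * t ^ (-(a + 2)))
    {x : ℝ} (hx : 1 ≤ x) :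
    -deriv V x ≤ c₂ * (2 * x ^ (-(a + 1))) := by
  have hx0 : (0:ℝ) < x := by linarith
  obtain ⟨hsum, hts⟩ := tail_bound ha hx
  set T : ℝ := ∑' n : ℕ, (x + n) ^ (-(a + 2)) with hT
  have key : ∀ m : ℕ, deriv V (x + m) ≤ deriv V x + c₂ * T := by
    intro m
    set f : ℕ → ℝ := fun n => deriv V (x + n) with hf
    have tel : f m - f 0 = ∑ n ∈ Finset.range m, (f (n + 1) - f n) :=
      (Finset.sum_range_sub f m).symm
    have hterm : ∀ n ∈ Finset.range m, f (n + 1) - f n ≤ c₂ * (x + n) ^ (-(a + 2)) := by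
      intro n _
      have hxn : (0:ℝ) < x + n := by positivity
      obtain ⟨ξ, hξ, heq⟩ := mvtV' h2 hxn (by linarith : (x + n : ℝ) < x + n + 1)
      have hξ1 : (1:ℝ) ≤ ξ := le_trans (by linarith [(Nat.cast_nonneg n : (0:ℝ) ≤ n)] : (1:ℝ) ≤ x + n)
        (le_of_lt hξ.1)
      have h1 : deriv (deriv V) ξ ≤ c₂ * (x + n) ^ (-(a + 2)) := by
        refine le_trans (hub ξ hξ1) ?_
        have : ξ ^ (-(a + 2)) ≤ (x + n) ^ (-(a + 2)) :=
          Real.rpow_le_rpow_of_nonpos hxn (le_of_lt hξ.1) (by linarith)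
        nlinarith
      have hfe : f (n + 1) - f n = deriv (deriv V) ξ * (x + n + 1 - (x + n)) := by
        simp only [hf]; push_cast
        rw [show x + ((n:ℝ) + 1) = x + (n:ℝ) + 1 by ring]
        exact heq
      rw [hfe]; nlinarith [h1]
    have hsumle : ∑ n ∈ Finset.range m, (f (n + 1) - f n)
        ≤ ∑ n ∈ Finset.range m, c₂ * (x + n) ^ (-(a + 2)) := Finset.sum_le_sum hterm
    have hsum2 : ∑ n ∈ Finset.range m, c₂ * (x + n) ^ (-(a + 2)) ≤ c₂ * T := by
      rw [← Finset.mul_sum]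
      refine mul_le_mul_of_nonneg_left ?_ (le_of_lt hc₂)
      exact Summable.sum_le_tsum _ (fun n _ => by positivity) hsum
    have hf0 : f 0 = deriv V x := by simp [hf]
    linarith [tel, hsumle, hsum2]
  have hlim : Tendsto (fun m : ℕ => deriv V (x + m)) atTop (nhds 0) :=
    hdec.comp (tendsto_atTop_add_const_left _ _ tendsto_natCast_atTop_atTop)
  have h0 : (0:ℝ) ≤ deriv V x + c₂ * T := le_of_tendsto hlim (Eventually.of_forall key)
  have : c₂ * T ≤ c₂ * (2 * x ^ (-(a + 1))) := mul_le_mul_of_nonneg_left hts (le_of_lt hc₂)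
  linarith


lemma summable_shift {p : ℝ} (hp : p < -1) : Summable (fun n : ℕ => ((n:ℝ) + 1) ^ p) := by
  have h := (summable_nat_add_iff 1).2 (Real.summable_nat_rpow.mpr hp)
  exact h.congr (fun n => by push_cast; ring_nf)

lemma gauss_sum (i : ℕ) : ∑ m ∈ Finset.range i, ((m:ℝ) + 1) = (i:ℝ) * ((i:ℝ) + 1) / 2 := by
  induction i with
  | zero => simp
  | succ n ih => rw [Finset.sum_range_succ, ih]; push_cast; ring

end AuxLemmas
set_option maxHeartbeats 1000000 in
/-- for 1 < a < 3/2 (with two-sided bounds on V''), the test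
sequence ε(i) = −i^{−b}/2, 1/2 < b < 2 − a, lies in Dom E_∞^l, has finite
quadratic part Q_∞(ε), but divergent linear part; hence E_∞^l(ε) = −∞ and
E_∞^l is not bounded below. -/
theorem statement18 (V : ℝ → ℝ) (a : ℝ) (h : BasicAssumptions V a)
    (ha : a < 3 / 2)
    (c₁ c₂ : ℝ) (hc₁ : 0 < c₁) (hc₂ : 0 < c₂)
    (hV'' : ∀ x : ℝ, 1 ≤ x →
      c₁ * x ^ (-(a + 2)) ≤ deriv (deriv V) x ∧
        deriv (deriv V) x ≤ c₂ * x ^ (-(a + 2)))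
    (b : ℝ) (hb1 : 1 / 2 < b) (hb2 : b < 2 - a) :
    (fun i : ℕ => -(i : ℝ) ^ (-b) / 2) ∈ DomEinfl ∧
    Qinf V (fun i : ℕ => -(i : ℝ) ^ (-b) / 2) < ⊤ ∧
    ¬ Summable (fun i : ℕ => sigmaInf V i * |(-(i : ℝ) ^ (-b) / 2)|) ∧
    Einfl V (fun i : ℕ => -(i : ℝ) ^ (-b) / 2) = ⊥ := by  classical
  have ha1 : 1 < a := h.one_lt_a
  have hb0 : 0 < b := by linarith
  set ε : ℕ → ℝ := fun i : ℕ => -(i : ℝ) ^ (-b) / 2 with hε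
  show ε ∈ DomEinfl ∧ Qinf V ε < ⊤ ∧
    ¬ Summable (fun i : ℕ => sigmaInf V i * |ε i|) ∧ Einfl V ε = ⊥
  have hrle1 : ∀ i : ℕ, (i:ℝ) ^ (-b) ≤ 1 := by
    intro i
    rcases Nat.eq_zero_or_pos i with h0 | h0
    · subst h0
      rw [Nat.cast_zero, Real.zero_rpow (by intro hh; linarith [neg_eq_zero.mp hh])]
      norm_num
    · exact Real.rpow_le_one_of_one_le_of_nonpos (by exact_mod_cast h0) (by linarith)
  have hεnonpos : ∀ i, ε i ≤ 0 := by
    intro i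
    have : (0:ℝ) ≤ (i:ℝ) ^ (-b) := Real.rpow_nonneg (Nat.cast_nonneg i) _
    simp only [hε]; linarith
  have hεabs : ∀ i, |ε i| = (i:ℝ) ^ (-b) / 2 := by
    intro i
    rw [abs_of_nonpos (hεnonpos i)]; simp only [hε]; ring
  have hεlb : ∀ i, -(1/2 : ℝ) ≤ ε i := by
    intro i; have := hrle1 i; simp only [hε]; linarith
  have hub : ∀ t : ℝ, 1 ≤ t → deriv (deriv V) t ≤ c₂ * t ^ (-(a + 2)) :=
    fun t ht => (hV'' t ht).2
  have hlb : ∀ t : ℝ, 1 ≤ t → c₁ * t ^ (-(a + 2)) ≤ deriv (deriv V) t :=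
    fun t ht => (hV'' t ht).1
  -- bounds on |V'| at natural points
  have hVp_ub : ∀ k : ℕ, 1 ≤ k → |deriv V (k:ℝ)| ≤ 2 * c₂ * (k:ℝ) ^ (-(a+1)) := by
    intro k hk
    have hk1 : (1:ℝ) ≤ (k:ℝ) := by exact_mod_cast hk
    have h1 := Vp_ub h.smooth h.decV' ha1 hc₂ hub hk1
    have h2 : deriv V (k:ℝ) ≤ 0 := Vp_nonpos h.smooth h.cvx h.decV' (by linarith)
    rw [abs_of_nonpos h2]; linarith
  have hVp_lb : ∀ k : ℕ, 1 ≤ k →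
      c₁ * (2 * (k:ℝ)) ^ (-(a+2)) * (k:ℝ) ≤ |deriv V (k:ℝ)| := by
    intro k hk
    have hk1 : (1:ℝ) ≤ (k:ℝ) := by exact_mod_cast hk
    have h1 := Vp_lb h.smooth h.cvx h.decV' ha1 hc₁ hlb hk1
    have h2 : deriv V (k:ℝ) ≤ 0 := Vp_nonpos h.smooth h.cvx h.decV' (by linarith)
    rw [abs_of_nonpos h2]; linarith
  -- summability of the inner series of sigmaInf
  have hsig_sum : ∀ i : ℕ,
      Summable (fun m : ℕ => ((m + 1 : ℕ) : ℝ) * |deriv V ((i + 1 + m : ℕ) : ℝ)|) := by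
    intro i
    have hbig : Summable (fun m : ℕ => 2 * c₂ * (((m:ℝ) + 1) ^ (-a))) :=
      (summable_shift (by linarith)).mul_left _
    refine Summable.of_nonneg_of_le (fun m => by positivity) (fun m => ?_) hbig
    have hm1 : ((m + 1 : ℕ) : ℝ) = (m:ℝ) + 1 := by push_cast; ring
    have hic : ((i + 1 + m : ℕ) : ℝ) = (i:ℝ) + 1 + m := by push_cast; ring
    have h1 := hVp_ub (i + 1 + m) (by omega)
    rw [hic] at h1
    have h2 : ((i:ℝ) + 1 + m) ^ (-(a+1)) ≤ ((m:ℝ) + 1) ^ (-(a+1)) := by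
      refine Real.rpow_le_rpow_of_nonpos (by positivity) ?_ (by linarith)
      have : (0:ℝ) ≤ (i:ℝ) := Nat.cast_nonneg i
      linarith
    have h3 : ((m:ℝ) + 1) * (((m:ℝ) + 1) ^ (-(a+1))) = ((m:ℝ) + 1) ^ (-a) := by
      nth_rewrite 1 [← Real.rpow_one ((m:ℝ) + 1)]
      rw [← Real.rpow_add (by positivity)]
      congr 1; ring
    calc ((m + 1 : ℕ) : ℝ) * |deriv V ((i + 1 + m : ℕ) : ℝ)|
        = ((m:ℝ) + 1) * |deriv V ((i:ℝ) + 1 + m)| := by rw [hm1, hic]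
      _ ≤ ((m:ℝ) + 1) * (2 * c₂ * ((i:ℝ) + 1 + m) ^ (-(a+1))) :=
          mul_le_mul_of_nonneg_left h1 (by positivity)
      _ ≤ ((m:ℝ) + 1) * (2 * c₂ * ((m:ℝ) + 1) ^ (-(a+1))) := by
          refine mul_le_mul_of_nonneg_left ?_ (by positivity)
          nlinarith [h2]
      _ = 2 * c₂ * (((m:ℝ) + 1) * (((m:ℝ) + 1) ^ (-(a+1)))) := by ring
      _ = 2 * c₂ * (((m:ℝ) + 1) ^ (-a)) := by rw [h3]
  have hsig_nonneg : ∀ i, 0 ≤ sigmaInf V i := by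
    intro i
    rw [sigmaInf]
    split
    · exact le_rfl
    · exact tsum_nonneg (fun m => by positivity)
  -- lower bound for sigmaInf
  set K : ℝ := c₁ * (4:ℝ) ^ (-(a+2)) / 4 with hK
  have hK0 : 0 < K := by
    have : (0:ℝ) < (4:ℝ) ^ (-(a+2)) := Real.rpow_pos_of_pos (by norm_num) _
    positivity
  have hsig_lb : ∀ i : ℕ, 1 ≤ i → K * (i:ℝ) ^ (1 - a - b) ≤ sigmaInf V i * |ε i| := by
    intro i hi
    have hi1 : (1:ℝ) ≤ (i:ℝ) := by exact_mod_cast hi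
    have hi0 : (0:ℝ) < (i:ℝ) := by linarith
    set D : ℝ := c₁ * (4 * (i:ℝ)) ^ (-(a+2)) * (i:ℝ) with hD
    have hD0 : 0 ≤ D := by
      have : (0:ℝ) ≤ (4 * (i:ℝ)) ^ (-(a+2)) := Real.rpow_nonneg (by positivity) _
      positivity
    have hterm : ∀ m ∈ Finset.range i,
        ((m:ℝ) + 1) * D ≤ ((m + 1 : ℕ) : ℝ) * |deriv V ((i + 1 + m : ℕ) : ℝ)| := by
      intro m hm
      have hmi : m < i := Finset.mem_range.mp hm
      have hmiR : (m:ℝ) + 1 ≤ (i:ℝ) := by exact_mod_cast hmi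
      have hm1 : ((m + 1 : ℕ) : ℝ) = (m:ℝ) + 1 := by push_cast; ring
      have hic : ((i + 1 + m : ℕ) : ℝ) = (i:ℝ) + 1 + m := by push_cast; ring
      have h1 := hVp_lb (i + 1 + m) (by omega)
      rw [hic] at h1
      have h2 : (4 * (i:ℝ)) ^ (-(a+2)) ≤ (2 * ((i:ℝ) + 1 + m)) ^ (-(a+2)) := by
        refine Real.rpow_le_rpow_of_nonpos (by positivity) (by linarith) (by linarith)
      have h3 : (i:ℝ) ≤ (i:ℝ) + 1 + m := by
        have : (0:ℝ) ≤ (m:ℝ) := Nat.cast_nonneg m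
        linarith
      have h4 : D ≤ c₁ * (2 * ((i:ℝ) + 1 + m)) ^ (-(a+2)) * ((i:ℝ) + 1 + m) := by
        rw [hD]
        have e1 : c₁ * (4 * (i:ℝ)) ^ (-(a+2)) ≤ c₁ * (2 * ((i:ℝ) + 1 + m)) ^ (-(a+2)) :=
          mul_le_mul_of_nonneg_left h2 hc₁.le
        refine mul_le_mul e1 h3 hi0.le ?_
        have : (0:ℝ) ≤ (2 * ((i:ℝ) + 1 + m)) ^ (-(a+2)) := Real.rpow_nonneg (by positivity) _
        positivity
      rw [hm1, hic]
      calc ((m:ℝ) + 1) * D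
          ≤ ((m:ℝ) + 1) * (c₁ * (2 * ((i:ℝ) + 1 + m)) ^ (-(a+2)) * ((i:ℝ) + 1 + m)) :=
            mul_le_mul_of_nonneg_left h4 (by positivity)
        _ ≤ ((m:ℝ) + 1) * |deriv V ((i:ℝ) + 1 + m)| :=
            mul_le_mul_of_nonneg_left h1 (by positivity)
    have hsum_ge : D * ((i:ℝ) * ((i:ℝ) + 1) / 2) ≤ sigmaInf V i := by
      have h5 := Finset.sum_le_sum hterm
      have h6 : ∑ m ∈ Finset.range i, ((m:ℝ) + 1) * D
          = ((i:ℝ) * ((i:ℝ) + 1) / 2) * D := by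
        rw [← Finset.sum_mul, gauss_sum]
      have h7 : ∑ m ∈ Finset.range i, ((m + 1 : ℕ) : ℝ) * |deriv V ((i + 1 + m : ℕ) : ℝ)|
          ≤ ∑' m : ℕ, ((m + 1 : ℕ) : ℝ) * |deriv V ((i + 1 + m : ℕ) : ℝ)| :=
        Summable.sum_le_tsum _ (fun n _ => by positivity) (hsig_sum i)
      have h8 : sigmaInf V i = ∑' m : ℕ, ((m + 1 : ℕ) : ℝ) * |deriv V ((i + 1 + m : ℕ) : ℝ)| := by
        rw [sigmaInf, if_neg (by omega)]
      rw [h8]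
      calc D * ((i:ℝ) * ((i:ℝ) + 1) / 2) = ((i:ℝ) * ((i:ℝ) + 1) / 2) * D := by ring
        _ = ∑ m ∈ Finset.range i, ((m:ℝ) + 1) * D := h6.symm
        _ ≤ ∑ m ∈ Finset.range i, ((m + 1 : ℕ) : ℝ) * |deriv V ((i + 1 + m : ℕ) : ℝ)| := h5
        _ ≤ _ := h7
    -- rpow algebra
    have hmul : (4 * (i:ℝ)) ^ (-(a+2)) = (4:ℝ) ^ (-(a+2)) * (i:ℝ) ^ (-(a+2)) :=
      Real.mul_rpow (by norm_num) hi0.le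
    have hpow : (i:ℝ) ^ (-(a+2)) * (i:ℝ) ^ (3:ℕ) * (i:ℝ) ^ (-b) = (i:ℝ) ^ (1 - a - b) := by
      rw [← Real.rpow_natCast (i:ℝ) 3, ← Real.rpow_add hi0, ← Real.rpow_add hi0]
      congr 1; push_cast; ring
    have e2 : D * ((i:ℝ) * (i:ℝ) / 2) * ((i:ℝ) ^ (-b) / 2) = K * (i:ℝ) ^ (1 - a - b) := by
      rw [hD, hmul, hK, ← hpow]; ring
    have e1 : D * ((i:ℝ) * (i:ℝ) / 2) * ((i:ℝ) ^ (-b) / 2)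
        ≤ D * ((i:ℝ) * ((i:ℝ) + 1) / 2) * ((i:ℝ) ^ (-b) / 2) := by
      have hr : (0:ℝ) ≤ (i:ℝ) ^ (-b) / 2 := by positivity
      refine mul_le_mul_of_nonneg_right (mul_le_mul_of_nonneg_left (by nlinarith) hD0) hr
    have e3 : D * ((i:ℝ) * ((i:ℝ) + 1) / 2) * ((i:ℝ) ^ (-b) / 2) ≤ sigmaInf V i * |ε i| := by
      rw [hεabs i]
      exact mul_le_mul_of_nonneg_right hsum_ge (by positivity)
    linarith [e1, e2, e3]
  have hnot : ¬ Summable (fun i : ℕ => sigmaInf V i * |ε i|) := by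
    intro hS
    have hcmp : ∀ i : ℕ, K * (i:ℝ) ^ (1 - a - b) ≤ sigmaInf V i * |ε i| := by
      intro i
      rcases Nat.eq_zero_or_pos i with h0 | h0
      · subst h0
        rw [Nat.cast_zero, Real.zero_rpow (by intro hh; linarith), sigmaInf, if_pos rfl]
        simp
      · exact hsig_lb i h0
    have hKS : Summable (fun i : ℕ => K * (i:ℝ) ^ (1 - a - b)) :=
      Summable.of_nonneg_of_le
        (fun i => by positivity)
        hcmp hS
    have := Real.summable_nat_rpow.mp ((summable_mul_left_iff hK0.ne').mp hKS)
    linarith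
  -- Part 1 : membership in the domain
  have hmem : ε ∈ DomEinfl := by
    refine ⟨?_, ?_, ?_⟩
    · have hsum : Summable (fun i : ℕ => (i:ℝ) ^ (-b * 2)) :=
        Real.summable_nat_rpow.mpr (by linarith)
      refine Summable.of_nonneg_of_le (fun i => sq_nonneg _) (fun i => ?_) hsum
      have h1 : ε i ^ 2 = ((i:ℝ) ^ (-b)) ^ 2 / 4 := by simp only [hε]; ring
      have h2 : (i:ℝ) ^ (-b * 2) = ((i:ℝ) ^ (-b)) ^ 2 := by
        rw [Real.rpow_mul (Nat.cast_nonneg i), Real.rpow_two]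
      rw [h1, h2]
      nlinarith [sq_nonneg ((i:ℝ) ^ (-b))]
    · simp only [hε]
      rw [Nat.cast_zero, Real.zero_rpow (by intro hh; linarith [neg_eq_zero.mp hh])]
      norm_num
    · intro i _
      have := hrle1 i
      simp only [hε]; linarith
  -- Part 2 : finiteness of the quadratic part
  obtain ⟨c, hc0, hcb⟩ := h.decV'' (1/2) (by norm_num)
  set K1 : ℝ := c * (2:ℝ) ^ (a+2) / 4 with hK1
  have h2pos : (0:ℝ) < (2:ℝ) ^ (a+2) := Real.rpow_pos_of_pos (by norm_num) _
  have hK10 : 0 < K1 := by positivity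
  have hphi : ∀ k j : ℕ,
      phi V ((k:ℝ) + 1) (∑ l ∈ Finset.Icc (j+1) (j+k+1), ε l)
        ≤ K1 * ((k:ℝ) + 1) ^ (-a) * (((j:ℝ) + 1) ^ (-b)) ^ 2 := by
    intro k j
    set S : ℝ := ∑ l ∈ Finset.Icc (j+1) (j+k+1), ε l with hS
    have hcard : (Finset.Icc (j+1) (j+k+1)).card = k + 1 := by
      rw [Nat.card_Icc]; omega
    have hS_nonpos : S ≤ 0 := Finset.sum_nonpos (fun l _ => hεnonpos l)
    have hS_lb : -(((k:ℝ) + 1) / 2) ≤ S := by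
      have hle := Finset.card_nsmul_le_sum (Finset.Icc (j+1) (j+k+1)) ε (-(1/2 : ℝ))
        (fun l _ => hεlb l)
      rw [hcard, nsmul_eq_mul] at hle
      push_cast at hle
      linarith
    have hS_abs : -S ≤ ((k:ℝ) + 1) * (((j:ℝ) + 1) ^ (-b)) / 2 := by
      have hle := Finset.sum_le_card_nsmul (Finset.Icc (j+1) (j+k+1)) (fun l => -ε l)
        ((((j:ℝ) + 1) ^ (-b)) / 2) ?_
      · rw [hcard, nsmul_eq_mul, Finset.sum_neg_distrib] at hle
        push_cast at hle
        linarith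
      · intro l hl
        have hl1 : j + 1 ≤ l := (Finset.mem_Icc.mp hl).1
        have hlR : (j:ℝ) + 1 ≤ (l:ℝ) := by exact_mod_cast hl1
        have : (l:ℝ) ^ (-b) ≤ ((j:ℝ) + 1) ^ (-b) :=
          Real.rpow_le_rpow_of_nonpos (by positivity) hlR (by linarith)
        simp only [hε]
        linarith
    set M : ℝ := c * ((((k:ℝ) + 1) / 2) ^ (-(a+2))) with hM
    have hkp : (0:ℝ) < (k:ℝ) + 1 := by positivity
    have htay : V (((k:ℝ) + 1) + S) - V ((k:ℝ) + 1) - deriv V ((k:ℝ) + 1) * S ≤ M * S ^ 2 := by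
      refine taylor_ub h.smooth h.cvx (by linarith) hS_nonpos ?_
      intro t ht
      have ht1 : ((k:ℝ) + 1) / 2 ≤ t := by
        have := ht.1; linarith
      have ht2 : (1/2 : ℝ) ≤ t := by linarith
      have habs : |t| = t := abs_of_pos (by linarith)
      have hb1' := hcb t (by rw [habs]; linarith)
      rw [habs] at hb1'
      have : t ^ (-(a+2)) ≤ (((k:ℝ) + 1) / 2) ^ (-(a+2)) :=
        Real.rpow_le_rpow_of_nonpos (by positivity) ht1 (by linarith)
      rw [hM]
      calc deriv (deriv V) t ≤ c * t ^ (-(a+2)) := hb1'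
        _ ≤ c * ((((k:ℝ) + 1) / 2) ^ (-(a+2))) := mul_le_mul_of_nonneg_left this hc0.le
    have hS2 : S ^ 2 ≤ (((k:ℝ) + 1) * (((j:ℝ) + 1) ^ (-b)) / 2) ^ 2 := by
      have habsS : |S| = -S := abs_of_nonpos hS_nonpos
      calc S ^ 2 = |S| ^ 2 := (sq_abs S).symm
        _ ≤ (((k:ℝ) + 1) * (((j:ℝ) + 1) ^ (-b)) / 2) ^ 2 := by
            refine pow_le_pow_left₀ (abs_nonneg S) ?_ 2
            rw [habsS]; exact hS_abs
    have hMval : M = c * (2:ℝ) ^ (a+2) * ((k:ℝ) + 1) ^ (-(a+2)) := by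
      rw [hM, Real.div_rpow hkp.le (by norm_num), Real.rpow_neg (by norm_num : (0:ℝ) ≤ 2),
        div_eq_mul_inv, inv_inv]
      ring
    have hM0 : 0 ≤ M := by
      rw [hMval]
      have : (0:ℝ) ≤ ((k:ℝ) + 1) ^ (-(a+2)) := Real.rpow_nonneg hkp.le _
      positivity
    have hka : ((k:ℝ) + 1) ^ (-(a+2)) * ((k:ℝ) + 1) ^ (2:ℕ) = ((k:ℝ) + 1) ^ (-a) := by
      rw [← Real.rpow_natCast ((k:ℝ) + 1) 2, ← Real.rpow_add hkp]
      congr 1; push_cast; ring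
    have hfin : M * S ^ 2 ≤ K1 * ((k:ℝ) + 1) ^ (-a) * (((j:ℝ) + 1) ^ (-b)) ^ 2 := by
      have step1 : M * S ^ 2 ≤ M * (((k:ℝ) + 1) * (((j:ℝ) + 1) ^ (-b)) / 2) ^ 2 :=
        mul_le_mul_of_nonneg_left hS2 hM0
      have step2 : M * (((k:ℝ) + 1) * (((j:ℝ) + 1) ^ (-b)) / 2) ^ 2
          = K1 * ((k:ℝ) + 1) ^ (-a) * (((j:ℝ) + 1) ^ (-b)) ^ 2 := by
        rw [hMval, hK1, ← hka]; ring
      linarith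
    calc phi V ((k:ℝ) + 1) S
        = V (((k:ℝ) + 1) + S) - V ((k:ℝ) + 1) - deriv V ((k:ℝ) + 1) * S := rfl
      _ ≤ M * S ^ 2 := htay
      _ ≤ _ := hfin
  have hsumk : Summable (fun k : ℕ => K1 * ((k:ℝ) + 1) ^ (-a)) :=
    (summable_shift (by linarith)).mul_left _
  have hsumj : Summable (fun j : ℕ => (((j:ℝ) + 1) ^ (-b)) ^ 2) := by
    refine (summable_shift (show -b * 2 < -1 by linarith)).congr (fun j => ?_)
    rw [Real.rpow_mul (by positivity), Real.rpow_two]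
  have hQ : Qinf V ε < ⊤ := by
    have hle : Qinf V ε ≤
        (∑' k : ℕ, ENNReal.ofReal (K1 * ((k:ℝ) + 1) ^ (-a))) *
          (∑' j : ℕ, ENNReal.ofReal ((((j:ℝ) + 1) ^ (-b)) ^ 2)) := by
      rw [Qinf]
      calc ∑' (k : ℕ) (j : ℕ),
            ENNReal.ofReal (phi V ((k:ℝ) + 1) (∑ l ∈ Finset.Icc (j+1) (j+k+1), ε l))
          ≤ ∑' (k : ℕ) (j : ℕ),
            ENNReal.ofReal (K1 * ((k:ℝ) + 1) ^ (-a) * (((j:ℝ) + 1) ^ (-b)) ^ 2) :=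
            ENNReal.tsum_le_tsum (fun k => ENNReal.tsum_le_tsum
              (fun j => ENNReal.ofReal_le_ofReal (hphi k j)))
        _ = ∑' (k : ℕ) (j : ℕ),
            ENNReal.ofReal (K1 * ((k:ℝ) + 1) ^ (-a)) *
              ENNReal.ofReal ((((j:ℝ) + 1) ^ (-b)) ^ 2) := by
            refine tsum_congr (fun k => tsum_congr (fun j => ?_))
            rw [ENNReal.ofReal_mul]
            have : (0:ℝ) ≤ ((k:ℝ) + 1) ^ (-a) := Real.rpow_nonneg (by positivity) _
            positivity
        _ = ∑' (k : ℕ), ENNReal.ofReal (K1 * ((k:ℝ) + 1) ^ (-a)) *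
              (∑' (j : ℕ), ENNReal.ofReal ((((j:ℝ) + 1) ^ (-b)) ^ 2)) := by
            refine tsum_congr (fun k => ?_)
            exact ENNReal.tsum_mul_left
        _ = _ := ENNReal.tsum_mul_right
    refine lt_of_le_of_lt hle (ENNReal.mul_lt_top ?_ ?_)
    · rw [← ENNReal.ofReal_tsum_of_nonneg (fun k => by
        have : (0:ℝ) ≤ ((k:ℝ) + 1) ^ (-a) := Real.rpow_nonneg (by positivity) _
        positivity) hsumk]
      exact ENNReal.ofReal_lt_top
    · rw [← ENNReal.ofReal_tsum_of_nonneg (fun j => sq_nonneg _) hsumj]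
      exact ENNReal.ofReal_lt_top
  -- Part 4 : the limit energy is -infinity
  have hlin : linPart V ε = ⊥ := by
    have h1 : (∑' i : ℕ, ENNReal.ofReal (sigmaInf V i * ε i)) = 0 := by
      have : ∀ i : ℕ, ENNReal.ofReal (sigmaInf V i * ε i) = 0 := fun i =>
        ENNReal.ofReal_of_nonpos (mul_nonpos_of_nonneg_of_nonpos (hsig_nonneg i) (hεnonpos i))
      rw [tsum_congr this]; simp
    have h2 : (∑' i : ℕ, ENNReal.ofReal (-(sigmaInf V i * ε i))) = ⊤ := by
      by_contra h2ne
      refine hnot ?_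
      have hsumm := ENNReal.summable_toReal h2ne
      refine hsumm.congr (fun i => ?_)
      have hnn : 0 ≤ -(sigmaInf V i * ε i) := by
        have := mul_nonpos_of_nonneg_of_nonpos (hsig_nonneg i) (hεnonpos i)
        linarith
      rw [ENNReal.toReal_ofReal hnn, abs_of_nonpos (hεnonpos i)]
      ring
    rw [linPart, h1, h2]
    rw [EReal.coe_ennreal_zero, EReal.coe_ennreal_top, sub_eq_add_neg, EReal.neg_top,
      EReal.add_bot]
  have hE : Einfl V ε = ⊥ := by
    rw [Einfl, hlin, EReal.add_bot]
  exact ⟨hmem, hQ, hnot, hE⟩
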